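/- Let G be a bipartite graph with a fixed bipartition V(G) = X_G ⊔ Y_G and with m edges, and let r be an integer with 0 ≤ r ≤ ⌊m/2⌋. Suppose there exists a set U ⊆ X_G such that exactly r edges of G are incident to a vertex of U. Then there exists a positive integer N such that for every n ≥ N there is an integer z < n²/2 with the property that every 2-edge coloring E(K_{n,n}) = R ⊔ B with more than z edges in each color class contains a copy of G having exactly r edges in one of the two colors and m − r edges in the other color. -/

import Mathlib

/-- The number of red edges in a 2-edge coloring of `K_{n,n}`.  The coloring is encoded
as `c : Fin n → Fin n → Bool`, where `c v w = true` means that the edge between vertex `v`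
of the first part and vertex `w` of the second part is red, and `c v w = false` means it
is blue. -/
def redTotal {n : ℕ} (c : Fin n → Fin n → Bool) : ℕ :=
  (Finset.univ.filter fun p : Fin n × Fin n => c p.1 p.2 = true).card

/-- The number of blue edges in a 2-edge coloring of `K_{n,n}`. -/
def blueTotal {n : ℕ} (c : Fin n → Fin n → Bool) : ℕ :=
  (Finset.univ.filter fun p : Fin n × Fin n => c p.1 p.2 = false).card

/-- `redB c u v = true` iff `u` and `v` lie in different parts of `K_{n,n}` and the edge
between them is red (under the coloring `c : Fin n → Fin n → Bool`, where `c v w = true`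
means the edge between vertex `v` of the first part and `w` of the second part is red). -/
def redB {n : ℕ} (c : Fin n → Fin n → Bool) : Fin n ⊕ Fin n → Fin n ⊕ Fin n → Bool
  | Sum.inl v, Sum.inr w => c v w
  | Sum.inr w, Sum.inl v => c v w
  | _, _ => false

/-- `blueB c u v = true` iff `u` and `v` lie in different parts of `K_{n,n}` and the edge
between them is blue. -/
def blueB {n : ℕ} (c : Fin n → Fin n → Bool) : Fin n ⊕ Fin n → Fin n ⊕ Fin n → Bool
  | Sum.inl v, Sum.inr w => !c v w
  | Sum.inr w, Sum.inl v => !c v w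
  | _, _ => false

/-- `crossB u v = true` iff `u` and `v` lie in different parts of `K_{n,n}`,
i.e. `u v` is an edge of `K_{n,n}`. -/
def crossB {n : ℕ} : Fin n ⊕ Fin n → Fin n ⊕ Fin n → Bool
  | Sum.inl _, Sum.inr _ => true
  | Sum.inr _, Sum.inl _ => true
  | _, _ => false

/-- A bipartite graph `G` with fixed bipartition is encoded by its two parts `α`, `β`
and its edge set `E : Finset (α × β)`.  `IsCopy E f` says that `f` realizes a copy of `G`
in `K_{n,n}` (a subgraph of `K_{n,n}` isomorphic to `G`): `f` is an injective map from the
vertices of `G` to the vertices of `K_{n,n}` sending every edge of `G` to an edge of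
`K_{n,n}`. -/
def IsCopy {n : ℕ} {α β : Type*} (E : Finset (α × β)) (f : α ⊕ β → Fin n ⊕ Fin n) : Prop :=
  Function.Injective f ∧ ∀ p ∈ E, crossB (f (Sum.inl p.1)) (f (Sum.inr p.2)) = true

/-- The number of red edges of the copy of the bipartite graph with edge set `E`
realized by `f` in `K_{n,n}` colored by `c`. -/
def edgeRedCount {n : ℕ} {α β : Type*} (c : Fin n → Fin n → Bool)
    (E : Finset (α × β)) (f : α ⊕ β → Fin n ⊕ Fin n) : ℕ :=
  (E.filter fun p => redB c (f (Sum.inl p.1)) (f (Sum.inr p.2)) = true).card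

/-- The number of blue edges of the copy of the bipartite graph with edge set `E`
realized by `f` in `K_{n,n}` colored by `c`. -/
def edgeBlueCount {n : ℕ} {α β : Type*} (c : Fin n → Fin n → Bool)
    (E : Finset (α × β)) (f : α ⊕ β → Fin n ⊕ Fin n) : ℕ :=
  (E.filter fun p => blueB c (f (Sum.inl p.1)) (f (Sum.inr p.2)) = true).card


open Finset

lemma total_eq_sum {n : ℕ} (p : Fin n → Fin n → Bool) :
    (Finset.univ.filter fun x : Fin n × Fin n => p x.1 x.2 = true).card
      = ∑ i : Fin n, (Finset.univ.filter fun j => p i j = true).card := by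
  rw [Finset.card_filter, ← Finset.univ_product_univ, Finset.sum_product]
  exact Finset.sum_congr rfl fun i _ => (Finset.card_filter _ _).symm

lemma halving {n : ℕ} (g : Fin n → Fin n → Bool) :
    ∀ (q : ℕ) (rows cols : Finset (Fin n)), q ≤ rows.card →
    ∃ (sel cols' : Finset (Fin n)) (col : Fin n → Bool),
      sel ⊆ rows ∧ sel.card = q ∧ cols' ⊆ cols ∧ cols.card / 2 ^ q ≤ cols'.card ∧
      ∀ i ∈ sel, ∀ j ∈ cols', g i j = col i := by
  intro q
  induction q with
  | zero =>
    intro rows cols _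
    exact ⟨∅, cols, fun _ => true, Finset.empty_subset _, rfl, Finset.Subset.refl _,
      by simp, by simp⟩
  | succ q ih =>
    intro rows cols h
    obtain ⟨i, hi⟩ : rows.Nonempty := Finset.card_pos.mp (by omega)
    have hsplit : (cols.filter fun j => g i j = true).card
        + (cols.filter fun j => ¬ (g i j = true)).card = cols.card :=
      Finset.card_filter_add_card_filter_not _
    have hrec : q ≤ (rows.erase i).card := by
      rw [Finset.card_erase_of_mem hi]; omega
    have key : ∀ (half : Finset (Fin n)) (ε : Bool), half ⊆ cols →
        cols.card / 2 ≤ half.card → (∀ j ∈ half, g i j = ε) →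
        ∃ (sel cols' : Finset (Fin n)) (col : Fin n → Bool),
          sel ⊆ rows ∧ sel.card = q + 1 ∧ cols' ⊆ cols ∧
          cols.card / 2 ^ (q+1) ≤ cols'.card ∧ ∀ i' ∈ sel, ∀ j ∈ cols', g i' j = col i' := by
      intro half ε hhc hhcard hhe
      obtain ⟨sel', cols', col', hs1, hs2, hs3, hs4, hs5⟩ := ih (rows.erase i) half hrec
      refine ⟨insert i sel', cols', fun x => if x = i then ε else col' x, ?_, ?_,
        hs3.trans hhc, ?_, ?_⟩
      · exact Finset.insert_subset hi (hs1.trans (Finset.erase_subset _ _))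
      · rw [Finset.card_insert_of_notMem (fun hmem => Finset.notMem_erase i rows (hs1 hmem))]
        omega
      · calc cols.card / 2 ^ (q+1) = cols.card / 2 / 2 ^ q := by
              rw [Nat.div_div_eq_div_mul, pow_succ, mul_comm]
          _ ≤ half.card / 2 ^ q := Nat.div_le_div_right hhcard
          _ ≤ cols'.card := hs4
      · intro i' hi' j hj
        rcases Finset.mem_insert.mp hi' with rfl | hmem
        · simp only [if_pos rfl]; exact hhe j (hs3 hj)
        · have hne : i' ≠ i := fun h => Finset.notMem_erase i rows (h ▸ hs1 hmem)
          simp only [if_neg hne]; exact hs5 i' hmem j hj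
    by_cases hcase : cols.card / 2 ≤ (cols.filter fun j => g i j = true).card
    · exact key _ true (Finset.filter_subset _ _) hcase (fun j hj => (Finset.mem_filter.mp hj).2)
    · refine key (cols.filter fun j => ¬ (g i j = true)) false (Finset.filter_subset _ _) (by omega) ?_
      intro j hj
      have := (Finset.mem_filter.mp hj).2
      simpa using this

lemma monogrid {n : ℕ} (g : Fin n → Fin n → Bool) (s : ℕ) (rows cols : Finset (Fin n))
    (hr : 2 * s ≤ rows.card) (hc : s * 2 ^ (2 * s) ≤ cols.card) :
    ∃ (A B : Finset (Fin n)) (ε : Bool), A ⊆ rows ∧ B ⊆ cols ∧ A.card = s ∧ B.card = s ∧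
      ∀ i ∈ A, ∀ j ∈ B, g i j = ε := by
  obtain ⟨sel, cols', col, hsub, hcard, hcsub, hccard, hmono⟩ := halving g (2*s) rows cols hr
  have hcols' : s ≤ cols'.card := by
    refine le_trans ?_ hccard
    rw [Nat.le_div_iff_mul_le (pow_pos two_pos _)]
    exact hc
  obtain ⟨B, hBsub, hBcard⟩ := Finset.exists_subset_card_eq hcols'
  have hsplit : (sel.filter fun i => col i = true).card
      + (sel.filter fun i => ¬(col i = true)).card = sel.card :=
    Finset.card_filter_add_card_filter_not _
  by_cases hcase : s ≤ (sel.filter fun i => col i = true).card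
  · obtain ⟨A, hAsub, hAcard⟩ := Finset.exists_subset_card_eq hcase
    refine ⟨A, B, true, (hAsub.trans (Finset.filter_subset _ _)).trans hsub, hBsub.trans hcsub,
      hAcard, hBcard, ?_⟩
    intro i hiA j hjB
    have hcol : col i = true := (Finset.mem_filter.mp (hAsub hiA)).2
    rw [hmono i ((Finset.filter_subset _ _) (hAsub hiA)) j (hBsub hjB), hcol]
  · have hge : s ≤ (sel.filter fun i => ¬(col i = true)).card := by omega
    obtain ⟨A, hAsub, hAcard⟩ := Finset.exists_subset_card_eq hge
    refine ⟨A, B, false, (hAsub.trans (Finset.filter_subset _ _)).trans hsub, hBsub.trans hcsub,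
      hAcard, hBcard, ?_⟩
    intro i hiA j hjB
    have hcol : col i = false := by
      have := (Finset.mem_filter.mp (hAsub hiA)).2; simpa using this
    rw [hmono i ((Finset.filter_subset _ _) (hAsub hiA)) j (hBsub hjB), hcol]


lemma kst {n t : ℕ} (ht : 1 ≤ t) (hn : (t + 2) * 32 ^ (t + 2) ≤ n)
    (c : Fin n → Fin n → Bool) (hred : n / 2 * (n / 2) < redTotal c) :
    ∃ R C : Finset (Fin n), R.card = t ∧ C.card = t ∧ ∀ i ∈ R, ∀ j ∈ C, c i j = true := by
  classical
  by_contra hcon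
  push_neg at hcon
  set Nb : Fin n → Finset (Fin n) := fun i => Finset.univ.filter (fun j => c i j = true) with hNb
  set d : Fin n → ℕ := fun i => (Nb i).card with hdd
  have hfiber : ∀ T ∈ (Finset.univ : Finset (Fin n)).powersetCard t,
      (Finset.univ.filter fun i => T ⊆ Nb i).card ≤ t - 1 := by
    intro T hT
    by_contra hbig
    push_neg at hbig
    have hle : t ≤ (Finset.univ.filter fun i => T ⊆ Nb i).card := by omega
    obtain ⟨R, hRsub, hRcard⟩ := Finset.exists_subset_card_eq hle
    have hTcard : T.card = t := (Finset.mem_powersetCard.mp hT).2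
    obtain ⟨i, hiR, j, hjT, hij⟩ := hcon R T hRcard hTcard
    have hsubN : T ⊆ Nb i := (Finset.mem_filter.mp (hRsub hiR)).2
    exact hij ((Finset.mem_filter.mp (hsubN hjT)).2)
  have hS_ub : ∑ i : Fin n, (d i).choose t ≤ (t - 1) * n.choose t := by
    have step1 : ∀ i : Fin n, (d i).choose t
        = ((Finset.univ.powersetCard t).filter fun T => T ⊆ Nb i).card := by
      intro i
      rw [hdd]
      rw [← Finset.card_powersetCard]
      congr 1
      ext T
      simp only [Finset.mem_powersetCard, Finset.mem_filter, Finset.subset_univ, true_and]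
      tauto
    calc ∑ i : Fin n, (d i).choose t
        = ∑ i : Fin n, ∑ T ∈ Finset.univ.powersetCard t, if T ⊆ Nb i then 1 else 0 := by
          refine Finset.sum_congr rfl fun i _ => ?_
          rw [step1 i, Finset.card_filter]
      _ = ∑ T ∈ Finset.univ.powersetCard t, ∑ i : Fin n, if T ⊆ Nb i then 1 else 0 :=
          Finset.sum_comm
      _ = ∑ T ∈ Finset.univ.powersetCard t, (Finset.univ.filter fun i => T ⊆ Nb i).card := by
          exact Finset.sum_congr rfl fun T _ => (Finset.card_filter _ _).symm
      _ ≤ ∑ _T ∈ Finset.univ.powersetCard t, (t - 1) := Finset.sum_le_sum hfiber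
      _ = (t - 1) * n.choose t := by
          rw [Finset.sum_const, Finset.card_powersetCard, Finset.card_univ, Fintype.card_fin,
            smul_eq_mul, mul_comm]
  have hsum : redTotal c = ∑ i, d i := total_eq_sum c
  set H : Finset (Fin n) := Finset.univ.filter (fun i => n / 8 ≤ d i) with hHd
  set D : ℕ := H.card with hDd
  have hdub : ∀ i, d i ≤ n := fun i => by
    rw [hdd]
    exact le_trans (Finset.card_filter_le _ _) (by simp)
  have hsplitsum : ∑ i, d i ≤ D * n + n * (n / 8) := by
    have h1 : ∑ i ∈ H, d i ≤ D * n := by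
      calc ∑ i ∈ H, d i ≤ ∑ _i ∈ H, n := Finset.sum_le_sum fun i _ => hdub i
        _ = D * n := by rw [Finset.sum_const, smul_eq_mul]
    have h2 : ∑ i ∈ Finset.univ.filter (fun i => ¬ (n / 8 ≤ d i)), d i ≤ n * (n / 8) := by
      calc ∑ i ∈ Finset.univ.filter (fun i => ¬ (n / 8 ≤ d i)), d i
          ≤ ∑ _i ∈ Finset.univ.filter (fun i => ¬ (n / 8 ≤ d i)), (n/8) :=
            Finset.sum_le_sum fun i hi => by
              have := (Finset.mem_filter.mp hi).2; omega
        _ = (Finset.univ.filter (fun i : Fin n => ¬ (n / 8 ≤ d i))).card * (n/8) := by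
            rw [Finset.sum_const, smul_eq_mul]
        _ ≤ n * (n/8) := by
            refine Nat.mul_le_mul_right _ ?_
            exact le_trans (Finset.card_filter_le _ _) (by simp)
    calc ∑ i, d i
        = ∑ i ∈ H, d i + ∑ i ∈ Finset.univ.filter (fun i => ¬ (n/8 ≤ d i)), d i := by
          rw [hHd, Finset.sum_filter_add_sum_filter_not]
      _ ≤ D * n + n * (n/8) := Nat.add_le_add h1 h2
  have hnbig : 2048 ≤ n := by
    calc (2048 : ℕ) = 2 * 32 ^ 2 := by norm_num
      _ ≤ (t + 2) * 32 ^ (t + 2) := by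
          exact Nat.mul_le_mul (by omega) (Nat.pow_le_pow_right (by norm_num) (by omega))
      _ ≤ n := hn
  have hDn : n ≤ 16 * D := by
    have hkey : n / 2 * (n / 2) < D * n + n * (n / 8) := by
      calc n / 2 * (n / 2) < redTotal c := hred
        _ = ∑ i, d i := hsum
        _ ≤ D * n + n * (n / 8) := hsplitsum
    by_contra hcontra
    push_neg at hcontra
    have e1 : 2 * (n / 2) ≤ n := by omega
    have e2 : n ≤ 2 * (n / 2) + 1 := by omega
    have e3 : 8 * (n / 8) ≤ n := by omega
    have e4 : 16 * D ≤ n := by omega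
    zify at hkey e1 e2 e3 e4 hnbig
    nlinarith [hkey, e1, e2, e3, e4, hnbig, mul_le_mul_of_nonneg_left e3 (by positivity : (0:ℤ) ≤ n),
      mul_le_mul_of_nonneg_left e4 (by positivity : (0:ℤ) ≤ n),
      mul_le_mul_of_nonneg_left e2 (by positivity : (0:ℤ) ≤ n),
      mul_le_mul e2 e2 (by positivity) (by positivity)]
  -- lower bound on the sum
  have hheavy : ∀ i ∈ H, (n/8).choose t ≤ (d i).choose t := fun i hi =>
    Nat.choose_le_choose t (Finset.mem_filter.mp hi).2
  have hS_lb : D * (n/8).choose t ≤ ∑ i : Fin n, (d i).choose t := by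
    calc D * (n/8).choose t = ∑ _i ∈ H, (n/8).choose t := by rw [Finset.sum_const, smul_eq_mul]
      _ ≤ ∑ i ∈ H, (d i).choose t := Finset.sum_le_sum hheavy
      _ ≤ ∑ i : Fin n, (d i).choose t :=
          Finset.sum_le_sum_of_subset (Finset.subset_univ H)
  -- final numeric contradiction
  have hvt : t ≤ n / 16 := by
    have h16 : 16 * t ≤ n := by
      calc 16 * t ≤ 32 * (t + 2) := by omega
        _ ≤ (t + 2) * 32 ^ (t + 2) := by
            rw [mul_comm]
            exact Nat.mul_le_mul_left _ (Nat.le_self_pow (by omega) 32)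
        _ ≤ n := hn
    omega
  have hDv : n / 16 ≤ D := by omega
  have hDbig : (t - 1) * 31 ^ t < D := by
    have h1 : (t + 2) * 2 * 32 ^ (t+1) ≤ n / 16 := by
      have : ((t + 2) * 2 * 32 ^ (t+1)) * 16 ≤ n := by
        calc ((t + 2) * 2 * 32 ^ (t+1)) * 16 = (t + 2) * 32 ^ (t + 2) := by ring
          _ ≤ n := hn
      omega
    have h2 : (t - 1) * 31 ^ t < (t + 2) * 2 * 32 ^ (t+1) := by
      calc (t - 1) * 31 ^ t ≤ (t - 1) * 32 ^ (t+1) := by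
            exact Nat.mul_le_mul_left _ (Nat.pow_le_pow_left (by norm_num) t |>.trans
              (Nat.pow_le_pow_right (by norm_num) (by omega)))
        _ < (t + 2) * 2 * 32 ^ (t+1) := by
            exact (Nat.mul_lt_mul_right (by positivity)).mpr (by omega)
    omega
  have hfinal : (t - 1) * n.choose t < D * (n/8).choose t := by
    have hv1 : 1 ≤ n / 16 := le_trans ht hvt
    have hfac : 0 < t.factorial := Nat.factorial_pos t
    rw [← Nat.mul_lt_mul_left hfac]
    calc t.factorial * ((t-1) * n.choose t) = (t-1) * (t.factorial * n.choose t) := by ring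
      _ = (t-1) * n.descFactorial t := by rw [← Nat.descFactorial_eq_factorial_mul_choose]
      _ ≤ (t-1) * n ^ t := Nat.mul_le_mul_left _ (Nat.descFactorial_le_pow n t)
      _ ≤ (t-1) * (31 * (n/16)) ^ t := by
          refine Nat.mul_le_mul_left _ (Nat.pow_le_pow_left ?_ t)
          omega
      _ = (t-1) * 31 ^ t * (n/16) ^ t := by rw [mul_pow]; ring
      _ < D * (n/16) ^ t := by
          exact (Nat.mul_lt_mul_right (by positivity)).mpr hDbig
      _ ≤ D * (n/8 + 1 - t) ^ t := by
          refine Nat.mul_le_mul_left _ (Nat.pow_le_pow_left ?_ t)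
          omega
      _ ≤ D * (n/8).descFactorial t := Nat.mul_le_mul_left _ (Nat.pow_sub_le_descFactorial _ _)
      _ = D * (t.factorial * (n/8).choose t) := by rw [Nat.descFactorial_eq_factorial_mul_choose]
      _ = t.factorial * (D * (n/8).choose t) := by ring
  have : D * (n/8).choose t ≤ (t-1) * n.choose t := le_trans hS_lb hS_ub
  omega







lemma redB_swap {n : ℕ} (c : Fin n → Fin n → Bool) (x y : Fin n ⊕ Fin n) :
    redB c x.swap y.swap = redB (fun i j => c j i) x y := by
  rcases x with v | v <;> rcases y with w | w <;> rfl

lemma blueB_swap {n : ℕ} (c : Fin n → Fin n → Bool) (x y : Fin n ⊕ Fin n) :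
    blueB c x.swap y.swap = blueB (fun i j => c j i) x y := by
  rcases x with v | v <;> rcases y with w | w <;> rfl

lemma crossB_swap {n : ℕ} (x y : Fin n ⊕ Fin n) :
    crossB x.swap y.swap = crossB x y := by
  rcases x with v | v <;> rcases y with w | w <;> rfl

lemma embed {n : ℕ} {α β : Type*} [Fintype α] [Fintype β] [DecidableEq α] [DecidableEq β]
    (c : Fin n → Fin n → Bool) (E : Finset (α × β)) (U : Finset α)
    (A1 A2 B : Finset (Fin n)) (hd : Disjoint A1 A2)
    (h1 : A1.card = U.card) (h2 : A2.card = Fintype.card α - U.card)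
    (hB : B.card = Fintype.card β)
    (hred : ∀ i ∈ A1, ∀ j ∈ B, c i j = true)
    (hblue : ∀ i ∈ A2, ∀ j ∈ B, c i j = false) :
    ∃ f : α ⊕ β → Fin n ⊕ Fin n, IsCopy E f ∧
      edgeRedCount c E f = (E.filter fun p => p.1 ∈ U).card ∧
      edgeBlueCount c E f = (E.filter fun p => ¬ (p.1 ∈ U)).card := by
  classical
  have hUc : U.card = A1.card := h1.symm
  have hUcc : (Finset.univ \ U).card = A2.card := by
    rw [Finset.card_sdiff_of_subset (Finset.subset_univ U), Finset.card_univ, h2]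
  have hBc : (Finset.univ : Finset β).card = B.card := by rw [Finset.card_univ, hB]
  let e1 : {x // x ∈ U} ≃ {y // y ∈ A1} := Finset.equivOfCardEq hUc
  let e2 : {x // x ∈ Finset.univ \ U} ≃ {y // y ∈ A2} := Finset.equivOfCardEq hUcc
  let e3 : {x // x ∈ (Finset.univ : Finset β)} ≃ {y // y ∈ B} := Finset.equivOfCardEq hBc
  let gA : α → Fin n := fun x =>
    if h : x ∈ U then (e1 ⟨x, h⟩ : {y // y ∈ A1}).1
    else (e2 ⟨x, Finset.mem_sdiff.mpr ⟨Finset.mem_univ x, h⟩⟩ : {y // y ∈ A2}).1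
  let gB : β → Fin n := fun y => (e3 ⟨y, Finset.mem_univ y⟩ : {y // y ∈ B}).1
  have hgA1 : ∀ x (h : x ∈ U), gA x ∈ A1 := by
    intro x h; simp only [gA, dif_pos h]; exact (e1 ⟨x, h⟩).2
  have hgA2 : ∀ x, x ∉ U → gA x ∈ A2 := by
    intro x h; simp only [gA, dif_neg h]; exact (e2 _).2
  have hgB : ∀ y, gB y ∈ B := fun y => (e3 ⟨y, Finset.mem_univ y⟩).2
  have hgAinj : Function.Injective gA := by
    intro x y hxy
    by_cases hx : x ∈ U <;> by_cases hy : y ∈ U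
    · have hval : ((e1 ⟨x, hx⟩ : {y // y ∈ A1}) : Fin n)
          = ((e1 ⟨y, hy⟩ : {y // y ∈ A1}) : Fin n) := by
        simpa only [gA, dif_pos hx, dif_pos hy] using hxy
      exact Subtype.ext_iff.mp (e1.injective (Subtype.ext hval))
    · have hA2mem : gA x ∈ A2 := by rw [hxy]; exact hgA2 y hy
      exact absurd hA2mem (Finset.disjoint_left.mp hd (hgA1 x hx))
    · have hA1mem : gA x ∈ A1 := by rw [hxy]; exact hgA1 y hy
      exact absurd (hgA2 x hx) (Finset.disjoint_left.mp hd hA1mem)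
    · have hval : ((e2 ⟨x, Finset.mem_sdiff.mpr ⟨Finset.mem_univ x, hx⟩⟩ : {y // y ∈ A2}) : Fin n)
          = ((e2 ⟨y, Finset.mem_sdiff.mpr ⟨Finset.mem_univ y, hy⟩⟩ : {y // y ∈ A2}) : Fin n) := by
        simpa only [gA, dif_neg hx, dif_neg hy] using hxy
      exact Subtype.ext_iff.mp (e2.injective (Subtype.ext hval))
  have hgBinj : Function.Injective gB := by
    intro x y hxy
    exact Subtype.ext_iff.mp (e3.injective (Subtype.ext hxy))
  refine ⟨Sum.elim (fun x => Sum.inl (gA x)) (fun y => Sum.inr (gB y)), ⟨?_, ?_⟩, ?_, ?_⟩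
  · intro u v huv
    rcases u with x | x <;> rcases v with y | y <;>
      simp only [Sum.elim_inl, Sum.elim_inr, Sum.inl.injEq, Sum.inr.injEq] at huv ⊢
    · exact hgAinj huv
    · exact absurd huv (by simp)
    · exact absurd huv (by simp)
    · exact hgBinj huv
  · intro p _; rfl
  · unfold edgeRedCount
    congr 1
    apply Finset.filter_congr
    intro p _
    simp only [Sum.elim_inl, Sum.elim_inr]
    by_cases h : p.1 ∈ U
    · simp only [redB, hred _ (hgA1 _ h) _ (hgB _), h, iff_true]
    · simp only [redB, hblue _ (hgA2 _ h) _ (hgB _), h, iff_false]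
      exact Bool.false_ne_true
  · unfold edgeBlueCount
    congr 1
    apply Finset.filter_congr
    intro p _
    simp only [Sum.elim_inl, Sum.elim_inr]
    by_cases h : p.1 ∈ U
    · simp only [blueB, hred _ (hgA1 _ h) _ (hgB _), h, not_true, iff_false, Bool.not_true]
      exact Bool.false_ne_true
    · simp only [blueB, hblue _ (hgA2 _ h) _ (hgB _), h, not_false_iff, iff_true, Bool.not_false]


/-- Sufficiency for bipartite `r`-tonality.  Let `G` be a bipartite graph with fixed
bipartition `X_G ⊔ Y_G` (parts `α` and `β`, edge set `E`), `m` edges, and let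
`0 ≤ r ≤ ⌊m/2⌋`.  If there is a set `U ⊆ X_G` such that exactly `r` edges of `G` are
incident to a vertex of `U`, then there is `N` such that for every `n ≥ N` there is an
integer `z < n²/2` such that every 2-edge coloring of `K_{n,n}` with more than `z` edges
in each color class contains a copy of `G` with exactly `r` edges in one color and
`m - r` edges in the other. -/
theorem bipartite_r_tonal_sufficiency {α β : Type*} [Fintype α] [Fintype β]
    [DecidableEq α] [DecidableEq β] (E : Finset (α × β)) (m r : ℕ)
    (hm : E.card = m) (hr : r ≤ m / 2)
    (hU : ∃ U : Finset α, (E.filter fun p => p.1 ∈ U).card = r) :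
    ∃ N : ℕ, 0 < N ∧ ∀ n : ℕ, N ≤ n → ∃ z : ℕ, 2 * z < n ^ 2 ∧
      ∀ c : Fin n → Fin n → Bool, z < redTotal c → z < blueTotal c →
        ∃ f : α ⊕ β → Fin n ⊕ Fin n, IsCopy E f ∧
          ((edgeRedCount c E f = r ∧ edgeBlueCount c E f = m - r) ∨
           (edgeRedCount c E f = m - r ∧ edgeBlueCount c E f = r)) := by
  classical
  obtain ⟨U, hUr⟩ := hU
  set a := Fintype.card α with ha
  set b := Fintype.card β with hb
  set s := max a b with hs
  set t := (s + a + 2) * 4 ^ (s + 1) with htdef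
  have has : a ≤ s := le_max_left a b
  have hbs : b ≤ s := le_max_right a b
  have hts : 1 ≤ t := Nat.one_le_iff_ne_zero.mpr (by positivity)
  have hsat : s + a ≤ t := by
    calc s + a ≤ (s + a + 2) * 1 := by omega
      _ ≤ t := by
        rw [htdef]
        exact Nat.mul_le_mul_left _ (Nat.one_le_pow _ _ (by norm_num))
  have hat : a ≤ t := by omega
  have h2st : 2 * s ≤ t := by
    calc 2 * s ≤ (s + a + 2) * 4 := by omega
      _ ≤ t := Nat.mul_le_mul_left _ (Nat.le_self_pow (by omega) 4)
  have hpowt : s * 2 ^ (2 * s) ≤ t := by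
    have h4 : (2 : ℕ) ^ (2 * s) = 4 ^ s := by
      rw [pow_mul]; norm_num
    rw [h4, htdef]
    exact Nat.mul_le_mul (by omega) (Nat.pow_le_pow_right (by norm_num) (by omega))
  refine ⟨max 2 ((t + 2) * 32 ^ (t + 2)), lt_of_lt_of_le (by norm_num) (le_max_left _ _), ?_⟩
  intro n hn
  have hn2 : 2 ≤ n := le_trans (le_max_left _ _) hn
  have hnt : (t + 2) * 32 ^ (t + 2) ≤ n := le_trans (le_max_right _ _) hn
  refine ⟨n / 2 * (n / 2), ?_, ?_⟩
  · calc 2 * (n / 2 * (n / 2)) = 2 * (n / 2) * (n / 2) := by ring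
      _ ≤ n * (n / 2) := Nat.mul_le_mul_right _ (by omega)
      _ < n * n := (Nat.mul_lt_mul_left (by omega : 0 < n)).mpr (by omega)
      _ = n ^ 2 := (sq n).symm
  intro c hRed hBlue
  obtain ⟨Rr, Cr, hRrc, hCrc, hRrred⟩ := kst hts hnt c hRed
  have hblue' : n / 2 * (n / 2) < redTotal (fun i j => !c i j) := by
    have heq : redTotal (fun i j => !c i j) = blueTotal c := by
      simp only [redTotal, blueTotal, Bool.not_eq_true']
    rw [heq]; exact hBlue
  obtain ⟨Rb, Cb, hRbc, hCbc, hRbblue'⟩ := kst hts hnt _ hblue'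
  have hRbblue : ∀ i ∈ Rb, ∀ j ∈ Cb, c i j = false := fun i hi j hj => by
    have := hRbblue' i hi j hj; simpa using this
  obtain ⟨A', B', ε, hA'sub, hB'sub, hA'c, hB'c, hmono⟩ :=
    monogrid c s Rr Cb (by rw [hRrc]; omega) (by rw [hCbc]; exact hpowt)
  have hUa : U.card ≤ a := by rw [ha]; exact Finset.card_le_univ U
  have hnot : (E.filter fun p => ¬ (p.1 ∈ U)).card = m - r := by
    have hpair := Finset.card_filter_add_card_filter_not
      (s := E) (p := fun p => p.1 ∈ U)
    omega
  cases ε with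
  | true =>
    obtain ⟨A1, hA1sub, hA1c⟩ := Finset.exists_subset_card_eq
      (show U.card ≤ A'.card by omega)
    have hsd : Rb.card - A1.card ≤ (Rb \ A1).card := Finset.le_card_sdiff _ _
    obtain ⟨A2, hA2sub, hA2c⟩ := Finset.exists_subset_card_eq
      (show a - U.card ≤ (Rb \ A1).card by omega)
    obtain ⟨B, hBsub, hBc⟩ := Finset.exists_subset_card_eq
      (show b ≤ B'.card by omega)
    have hdisj : Disjoint A1 A2 := Finset.disjoint_left.mpr fun x hx1 hx2 =>
      (Finset.mem_sdiff.mp (hA2sub hx2)).2 hx1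
    obtain ⟨f, hcopy, hredc, hbluec⟩ := embed c E U A1 A2 B hdisj hA1c
      (by rw [hA2c, ha]) (by rw [hBc, hb])
      (fun i hi j hj => hmono i (hA1sub hi) j (hBsub hj))
      (fun i hi j hj => hRbblue i (Finset.mem_sdiff.mp (hA2sub hi)).1 j (hB'sub (hBsub hj)))
    exact ⟨f, hcopy, Or.inl ⟨by rw [hredc, hUr], by rw [hbluec, hnot]⟩⟩
  | false =>
    have hsd : Cr.card - B'.card ≤ (Cr \ B').card := Finset.le_card_sdiff _ _
    obtain ⟨C1, hC1sub, hC1c⟩ := Finset.exists_subset_card_eq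
      (show U.card ≤ (Cr \ B').card by omega)
    obtain ⟨C2, hC2sub, hC2c⟩ := Finset.exists_subset_card_eq
      (show a - U.card ≤ B'.card by omega)
    obtain ⟨B'', hB''sub, hB''c⟩ := Finset.exists_subset_card_eq
      (show b ≤ A'.card by omega)
    have hdisj : Disjoint C1 C2 := Finset.disjoint_left.mpr fun x hx1 hx2 =>
      (Finset.mem_sdiff.mp (hC1sub hx1)).2 (hC2sub hx2)
    obtain ⟨f', hcopy', hredc', hbluec'⟩ := embed (fun i j => c j i) E U C1 C2 B'' hdisj hC1c
      (by rw [hC2c, ha]) (by rw [hB''c, hb])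
      (fun i hi j hj => hRrred j (hA'sub (hB''sub hj)) i (Finset.mem_sdiff.mp (hC1sub hi)).1)
      (fun i hi j hj => hmono j (hB''sub hj) i (hC2sub hi))
    have hswapinj : Function.Injective (Sum.swap : Fin n ⊕ Fin n → Fin n ⊕ Fin n) :=
      Function.LeftInverse.injective Sum.swap_leftInverse
    refine ⟨Sum.swap ∘ f', ⟨hswapinj.comp hcopy'.1, fun p hp => ?_⟩, Or.inl ⟨?_, ?_⟩⟩
    · rw [Function.comp_apply, Function.comp_apply, crossB_swap]
      exact hcopy'.2 p hp
    · have hcount : edgeRedCount c E (Sum.swap ∘ f') = edgeRedCount (fun i j => c j i) E f' := by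
        unfold edgeRedCount
        congr 1
        apply Finset.filter_congr
        intro p _
        rw [Function.comp_apply, Function.comp_apply, redB_swap]
      rw [hcount, hredc', hUr]
    · have hcount : edgeBlueCount c E (Sum.swap ∘ f')
          = edgeBlueCount (fun i j => c j i) E f' := by
        unfold edgeBlueCount
        congr 1
        apply Finset.filter_congr
        intro p _
        rw [Function.comp_apply, Function.comp_apply, blueB_swap]
      rw [hcount, hbluec', hnot]
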